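/- Let k be any field and let A ∈ M_n(k). If every X ∈ M_n(k) satisfying Xᵀ A X = A is invertible (i.e. the monoid Sol_A is a group), then for every vector v ∈ k^n with A v = 0 and Aᵀ v = 0, the rank-one matrix v vᵀ (with entries v_i v_j) is nilpotent. -/

import Mathlib

open Matrix

/-- Over any field `k`, if every `X` with `Xᵀ A X = A` is invertible (i.e.
`Sol_A` is a group), then for every vector `v` with `A v = 0` and `Aᵀ v = 0`, the
rank-one matrix `v vᵀ` is nilpotent. -/
theorem stmt_3 {k : Type*} [Field k] (n : ℕ) (A : Matrix (Fin n) (Fin n) k)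
    (hGroup : ∀ X : Matrix (Fin n) (Fin n) k, Xᵀ * A * X = A → IsUnit X)
    (v : Fin n → k) (hv : A.mulVec v = 0) (hv' : Aᵀ.mulVec v = 0) :
    IsNilpotent (Matrix.vecMulVec v v) := by
  have hsq : vecMulVec v v * vecMulVec v v = (v ⬝ᵥ v) • vecMulVec v v := by
    ext i j
    simp only [Matrix.mul_apply, vecMulVec_apply, Matrix.smul_apply, smul_eq_mul, dotProduct]
    rw [Finset.sum_mul]
    exact Finset.sum_congr rfl fun x _ => by ring
  by_cases h0 : v ⬝ᵥ v = 0
  · exact ⟨2, by rw [pow_two, hsq, h0, zero_smul]⟩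
  · exfalso
    set M := vecMulVec v v with hM
    set c : k := -(v ⬝ᵥ v)⁻¹ with hc
    have hAM : A * M = 0 := by
      ext i j
      simp only [Matrix.mul_apply, vecMulVec_apply, Matrix.zero_apply, hM]
      have := congrFun hv i
      simp only [mulVec, dotProduct, Pi.zero_apply] at this
      calc ∑ x, A i x * (v x * v j) = (∑ x, A i x * v x) * v j := by
            rw [Finset.sum_mul]; exact Finset.sum_congr rfl fun x _ => by ring
        _ = 0 := by rw [this, zero_mul]
    have hMA : Mᵀ * A = 0 := by
      ext i j
      simp only [Matrix.mul_apply, vecMulVec_apply, Matrix.zero_apply, Matrix.transpose_apply, hM]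
      have := congrFun hv' j
      simp only [mulVec, dotProduct, Matrix.transpose_apply, Pi.zero_apply] at this
      calc ∑ x, v x * v i * A x j = v i * ∑ x, A x j * v x := by
            rw [Finset.mul_sum]; exact Finset.sum_congr rfl fun x _ => by ring
        _ = 0 := by rw [this, mul_zero]
    have hX : IsUnit (1 + c • M) := by
      apply hGroup
      have : (1 + c • M)ᵀ = 1 + c • Mᵀ := by
        rw [Matrix.transpose_add, Matrix.transpose_one, Matrix.transpose_smul]
      rw [this]
      simp [Matrix.mul_add, Matrix.add_mul, Matrix.mul_smul, Matrix.smul_mul, hAM, hMA]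
    have hMv : M.mulVec v = (v ⬝ᵥ v) • v := by
      ext i
      simp only [mulVec, dotProduct, vecMulVec_apply, Pi.smul_apply, smul_eq_mul, hM]
      rw [Finset.sum_mul]
      exact Finset.sum_congr rfl fun x _ => by ring
    have hXv : (1 + c • M).mulVec v = 0 := by
      rw [Matrix.add_mulVec, Matrix.one_mulVec, Matrix.smul_mulVec, hMv, hc,
        smul_smul]
      rw [neg_mul, inv_mul_cancel₀ h0]
      simp
    have hvz : v = 0 := by
      obtain ⟨B, hB⟩ := isUnit_iff_exists_inv'.mp hX
      have : B.mulVec ((1 + c • M).mulVec v) = v := by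
        rw [Matrix.mulVec_mulVec, hB, Matrix.one_mulVec]
      rw [hXv, Matrix.mulVec_zero] at this
      exact this.symm
    rw [hvz] at h0
    simp at h0
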